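/- arXiv:2412.06374 — 2 statements merged into one kernel-verified Lean document; each statement's English description precedes it below -/
import Mathlib

section
/- If U_1, U_2 are independent uniform random variables on (0,1), then X = sqrt(-2 log U_1) · cos(2π U_2) has the standard normal distribution N(0,1). -/
open MeasureTheory ProbabilityTheory Real Set ENNReal

namespace BoxMullerAux

lemma lintegral_image_eq_lintegral_abs_deriv_mul {s : Set ℝ} {f f' : ℝ → ℝ}
    (hs : MeasurableSet s) (hf' : ∀ x ∈ s, HasDerivWithinAt f (f' x) s x)
    (hf : Set.InjOn f s) (g : ℝ → ℝ≥0∞) :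
    ∫⁻ x in f '' s, g x = ∫⁻ x in s, ENNReal.ofReal |f' x| * g (f x) := by
  simpa only [ContinuousLinearMap.det_toSpanSingleton] using
    MeasureTheory.lintegral_image_eq_lintegral_abs_det_fderiv_mul volume hs
      (fun x hx => (hf' x hx).hasFDerivWithinAt) hf g

lemma lintegral_comp_polarCoord_symm (f : ℝ × ℝ → ℝ≥0∞) :
    (∫⁻ p in polarCoord.target, ENNReal.ofReal p.1 * f (polarCoord.symm p)) = ∫⁻ p, f p := by
  set B : ℝ × ℝ → ℝ × ℝ →L[ℝ] ℝ × ℝ := fun p =>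
    LinearMap.toContinuousLinearMap (Matrix.toLin (Module.Basis.finTwoProd ℝ) (Module.Basis.finTwoProd ℝ)
      !![Real.cos p.2, -p.1 * Real.sin p.2; Real.sin p.2, p.1 * Real.cos p.2]) with hB
  have B_det : ∀ p, (B p).det = p.1 := by
    intro p
    conv_rhs => rw [← one_mul p.1, ← Real.cos_sq_add_sin_sq p.2]
    simp only [hB, neg_mul, LinearMap.det_toContinuousLinearMap, LinearMap.det_toLin,
      Matrix.det_fin_two_of, sub_neg_eq_add]
    ring
  symm
  calc
    ∫⁻ p, f p = ∫⁻ p in polarCoord.source, f p := by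
      rw [← setLIntegral_univ]
      exact (setLIntegral_congr polarCoord_source_ae_eq_univ.symm)
    _ = ∫⁻ p in polarCoord.symm '' polarCoord.target, f p := by
      rw [polarCoord.symm_image_target_eq_source]
    _ = ∫⁻ p in polarCoord.target, ENNReal.ofReal |(B p).det| * f (polarCoord.symm p) :=
      MeasureTheory.lintegral_image_eq_lintegral_abs_det_fderiv_mul volume
        polarCoord.open_target.measurableSet
        (fun p _ => (hasFDerivAt_polarCoord_symm p).hasFDerivWithinAt)
        polarCoord.symm.injOn f
    _ = ∫⁻ p in polarCoord.target, ENNReal.ofReal p.1 * f (polarCoord.symm p) := by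
      refine setLIntegral_congr_fun polarCoord.open_target.measurableSet
        (fun p hp => ?_)
      rw [B_det, abs_of_pos hp.1]

lemma lintegral_Ioo01_sqrt_neg_two_log (h : ℝ → ℝ≥0∞) :
    (∫⁻ u in Ioo (0:ℝ) 1, h (Real.sqrt (-2 * Real.log u))) =
      ∫⁻ r in Ioi (0:ℝ), ENNReal.ofReal (r * Real.exp (-(r^2)/2)) * h r := by
  have himg : (fun r : ℝ => Real.exp (-(r^2)/2)) '' Ioi 0 = Ioo 0 1 := by
    ext u
    constructor
    · rintro ⟨r, hr, rfl⟩
      have hr' : (0:ℝ) < r := hr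
      exact ⟨Real.exp_pos _, by
        rw [Real.exp_lt_one_iff]
        nlinarith⟩
    · rintro ⟨hu0, hu1⟩
      have hlog : Real.log u < 0 := Real.log_neg hu0 hu1
      refine ⟨Real.sqrt (-2 * Real.log u), ?_, ?_⟩
      · exact mem_Ioi.2 (Real.sqrt_pos.2 (by nlinarith))
      · show Real.exp (-(Real.sqrt (-2 * Real.log u))^2/2) = u
        rw [Real.sq_sqrt (by nlinarith : (0:ℝ) ≤ -2 * Real.log u)]
        rw [show -(-2 * Real.log u)/2 = Real.log u by ring, Real.exp_log hu0]
  have hderiv : ∀ r ∈ Ioi (0:ℝ), HasDerivWithinAt (fun r : ℝ => Real.exp (-(r^2)/2))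
      (-(r * Real.exp (-(r^2)/2))) (Ioi 0) r := by
    intro r _
    have h1 : HasDerivAt (fun r : ℝ => -(r^2)/2) (-r) r := by
      have := ((hasDerivAt_pow 2 r).neg.div_const 2)
      refine this.congr_deriv ?_
      ring_nf
    have h2 := h1.exp
    refine h2.hasDerivWithinAt.congr_deriv ?_
    ring
  have hinj : Set.InjOn (fun r : ℝ => Real.exp (-(r^2)/2)) (Ioi 0) := by
    intro a ha b hb hab
    have ha' : (0:ℝ) < a := ha
    have hb' : (0:ℝ) < b := hb
    have : -(a^2)/2 = -(b^2)/2 := Real.exp_injective hab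
    nlinarith
  rw [← himg, lintegral_image_eq_lintegral_abs_deriv_mul measurableSet_Ioi hderiv hinj]
  refine setLIntegral_congr_fun measurableSet_Ioi
    (fun r hr => ?_)
  have hr' : (0:ℝ) < r := hr
  have h1 : |(-(r * Real.exp (-(r^2)/2)))| = r * Real.exp (-(r^2)/2) := by
    rw [abs_neg, abs_of_pos (by positivity)]
  rw [h1]
  congr 1
  rw [Real.log_exp, show -2 * (-(r^2)/2) = r^2 by ring, Real.sqrt_sq hr'.le]

end BoxMullerAux

/-- Box–Muller: if `U₁, U₂` are independent uniform on `(0,1)`, then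
`√(-2 log U₁) · cos(2π U₂)` is standard normal. -/
theorem stmt_16 {Ω : Type*} [MeasurableSpace Ω] (μ : Measure Ω) [IsProbabilityMeasure μ]
    (U₁ U₂ : Ω → ℝ) (hU₁_meas : Measurable U₁) (hU₂_meas : Measurable U₂)
    (hU₁ : μ.map U₁ = volume.restrict (Set.Ioo (0 : ℝ) 1))
    (hU₂ : μ.map U₂ = volume.restrict (Set.Ioo (0 : ℝ) 1))
    (hindep : IndepFun U₁ U₂ μ) :
    μ.map (fun ω => Real.sqrt (-2 * Real.log (U₁ ω)) * Real.cos (2 * π * U₂ ω))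
      = gaussianReal 0 1 := by
  have h2pi : (0:ℝ) < 2 * π := by positivity
  set ν : Measure ℝ := volume.restrict (Set.Ioo (0:ℝ) 1) with hν
  set F : ℝ × ℝ → ℝ := fun p => Real.sqrt (-2 * Real.log p.1) * Real.cos (2 * π * p.2) with hF
  have hF_meas : Measurable F := by
    exact ((measurable_fst.log.const_mul (-2)).sqrt).mul ((measurable_snd.const_mul (2 * π)).cos)
  have hpair : μ.map (fun ω => (U₁ ω, U₂ ω)) = ν.prod ν := by
    rw [(indepFun_iff_map_prod_eq_prod_map_map hU₁_meas.aemeasurable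
      hU₂_meas.aemeasurable).mp hindep, hU₁, hU₂]
  have hmapeq : μ.map (fun ω => Real.sqrt (-2 * Real.log (U₁ ω)) * Real.cos (2 * π * U₂ ω))
      = (ν.prod ν).map F := by
    rw [← hpair, Measure.map_map hF_meas (hU₁_meas.prodMk hU₂_meas)]
    rfl
  rw [hmapeq]
  refine Measure.ext fun s hs => ?_
  rw [Measure.map_apply hF_meas hs, gaussianReal_apply 0 one_ne_zero s]
  set g : ℝ → ℝ≥0∞ := s.indicator 1 with hg
  have hg_meas : Measurable g := measurable_one.indicator hs
  have hind : (ν.prod ν) (F ⁻¹' s) = ∫⁻ p, g (F p) ∂(ν.prod ν) := by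
    rw [← lintegral_indicator_one (hF_meas hs)]
    refine lintegral_congr fun p => ?_
    by_cases h : F p ∈ s <;> simp [hg, h]
  set K : ℝ → ℝ≥0∞ := fun θ => ∫⁻ r in Ioi (0:ℝ),
      ENNReal.ofReal (r * Real.exp (-(r^2)/2)) * g (r * Real.cos θ) with hK
  have step1 : (∫⁻ p, g (F p) ∂(ν.prod ν)) = ∫⁻ v in Ioo (0:ℝ) 1, K (2 * π * v) := by
    rw [hν, lintegral_prod_symm (fun p : ℝ × ℝ => g (F p)) (hg_meas.comp hF_meas).aemeasurable]
    refine lintegral_congr fun v => ?_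
    exact BoxMullerAux.lintegral_Ioo01_sqrt_neg_two_log (fun r => g (r * Real.cos (2 * π * v)))
  have step2 : (∫⁻ v in Ioo (0:ℝ) 1, K (2 * π * v)) =
      (ENNReal.ofReal (2 * π))⁻¹ * ∫⁻ θ in Ioo 0 (2 * π), K θ := by
    have himg : (fun v : ℝ => 2 * π * v) '' Ioo 0 1 = Ioo 0 (2 * π) := by
      rw [image_mul_left_Ioo h2pi]
      norm_num
    have hder : ∀ v ∈ Ioo (0:ℝ) 1,
        HasDerivWithinAt (fun v : ℝ => 2 * π * v) (2 * π) (Ioo 0 1) v := by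
      intro v _
      simpa using ((hasDerivAt_id v).const_mul (2 * π)).hasDerivWithinAt
    have hinj : Set.InjOn (fun v : ℝ => 2 * π * v) (Ioo 0 1) :=
      (mul_right_injective₀ h2pi.ne').injOn
    rw [← himg, BoxMullerAux.lintegral_image_eq_lintegral_abs_deriv_mul
      measurableSet_Ioo hder hinj K]
    simp only [abs_of_pos h2pi]
    rw [lintegral_const_mul' _ _ ENNReal.ofReal_ne_top, ← mul_assoc,
      ENNReal.inv_mul_cancel (ENNReal.ofReal_pos.mpr h2pi).ne' ENNReal.ofReal_ne_top, one_mul]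
  have hKper : ∀ θ : ℝ, K (θ + 2 * π) = K θ := by
    intro θ
    simp only [hK, Real.cos_add_two_pi]
  have htrans : (∫⁻ θ in Ioo π (2*π), K θ) = ∫⁻ x in Ioo (-π) 0, K x := by
    have himg : (fun x : ℝ => x + 2*π) '' Ioo (-π) 0 = Ioo π (2*π) := by
      rw [image_add_const_Ioo]
      congr 1 <;> ring
    have hder2 : ∀ x ∈ Ioo (-π) (0:ℝ), HasDerivWithinAt (fun x : ℝ => x + 2*π) 1 (Ioo (-π) 0) x :=
      fun x _ => ((hasDerivAt_id x).add_const (2*π)).hasDerivWithinAt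
    rw [← himg, BoxMullerAux.lintegral_image_eq_lintegral_abs_deriv_mul measurableSet_Ioo
      hder2 (fun a _ b _ h => by simpa using h) K]
    simp [hKper]
  have step3 : (∫⁻ θ in Ioo 0 (2*π), K θ) = ∫⁻ θ in Ioo (-π) π, K θ := by
    have d1 : Disjoint (Ioo (0:ℝ) π) (Ico π (2*π)) := by
      rw [Set.disjoint_left]; rintro x ⟨_, h1⟩ ⟨h2, _⟩; linarith
    have d2 : Disjoint (Ioo (-π) (0:ℝ)) (Ico 0 π) := by
      rw [Set.disjoint_left]; rintro x ⟨_, h1⟩ ⟨h2, _⟩; linarith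
    calc (∫⁻ θ in Ioo 0 (2*π), K θ) = ∫⁻ θ in Ioo 0 π ∪ Ico π (2*π), K θ := by
          rw [Set.Ioo_union_Ico_eq_Ioo Real.pi_pos (by linarith)]
      _ = (∫⁻ θ in Ioo 0 π, K θ) + ∫⁻ θ in Ico π (2*π), K θ :=
          lintegral_union measurableSet_Ico d1
      _ = (∫⁻ θ in Ioo 0 π, K θ) + ∫⁻ θ in Ioo π (2*π), K θ := by
          congr 1; exact (setLIntegral_congr Ioo_ae_eq_Ico).symm
      _ = (∫⁻ θ in Ioo 0 π, K θ) + ∫⁻ θ in Ioo (-π) 0, K θ := by rw [htrans]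
      _ = (∫⁻ θ in Ico 0 π, K θ) + ∫⁻ θ in Ioo (-π) 0, K θ := by
          congr 1; exact setLIntegral_congr Ioo_ae_eq_Ico
      _ = ∫⁻ θ in Ioo (-π) 0 ∪ Ico 0 π, K θ := by
          rw [lintegral_union measurableSet_Ico d2, add_comm]
      _ = ∫⁻ θ in Ioo (-π) π, K θ := by
          rw [Set.Ioo_union_Ico_eq_Ioo (by linarith [Real.pi_pos]) Real.pi_pos.le]
  have step4 : (∫⁻ θ in Ioo (-π) π, K θ)
      = ∫⁻ p : ℝ × ℝ, ENNReal.ofReal (Real.exp (-(p.1^2 + p.2^2)/2)) * g p.1 := by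
    rw [← BoxMullerAux.lintegral_comp_polarCoord_symm
      (fun p => ENNReal.ofReal (Real.exp (-(p.1^2 + p.2^2)/2)) * g p.1)]
    rw [polarCoord_target, Measure.volume_eq_prod, ← Measure.prod_restrict]
    rw [lintegral_prod_symm _ (by fun_prop)]
    refine lintegral_congr fun θ => ?_
    refine (setLIntegral_congr_fun measurableSet_Ioi
      (fun r hr => ?_)).symm
    have hr' : (0:ℝ) < r := hr
    have hsq : ((r, θ) : ℝ × ℝ).1 * Real.cos ((r, θ) : ℝ × ℝ).2 = r * Real.cos θ := rfl
    simp only [polarCoord_symm_apply]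
    have hsq2 : (r * Real.cos θ)^2 + (r * Real.sin θ)^2 = r^2 := by
      have := Real.sin_sq_add_cos_sq θ; nlinarith
    rw [hsq2, ENNReal.ofReal_mul hr'.le, mul_assoc]
  have step5 : (∫⁻ p : ℝ × ℝ, ENNReal.ofReal (Real.exp (-(p.1^2 + p.2^2)/2)) * g p.1)
      = ENNReal.ofReal (Real.sqrt (2*π)) *
        ∫⁻ x : ℝ, ENNReal.ofReal (Real.exp (-(x^2)/2)) * g x := by
    have hsplit : ∀ p : ℝ × ℝ, ENNReal.ofReal (Real.exp (-(p.1^2 + p.2^2)/2)) * g p.1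
        = (ENNReal.ofReal (Real.exp (-(p.1^2)/2)) * g p.1) *
          ENNReal.ofReal (Real.exp (-(p.2^2)/2)) := by
      intro p
      rw [show -(p.1^2 + p.2^2)/2 = -(p.1^2)/2 + -(p.2^2)/2 by ring, Real.exp_add,
        ENNReal.ofReal_mul (Real.exp_nonneg _)]
      ring
    simp only [hsplit]
    rw [Measure.volume_eq_prod, lintegral_prod_mul
      (f := fun x => ENNReal.ofReal (Real.exp (-(x^2)/2)) * g x)
      (g := fun y => ENNReal.ofReal (Real.exp (-(y^2)/2))) (by fun_prop) (by fun_prop)]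
    have hgauss : (∫⁻ y : ℝ, ENNReal.ofReal (Real.exp (-(y^2)/2)))
        = ENNReal.ofReal (Real.sqrt (2*π)) := by
      simp only [show ∀ y : ℝ, -(y^2)/2 = -(1/2) * y^2 from fun y => by ring]
      rw [← ofReal_integral_eq_lintegral_ofReal
        (integrable_exp_neg_mul_sq (by norm_num : (0:ℝ) < 1/2))
        (Filter.Eventually.of_forall fun y => (Real.exp_pos _).le)]
      rw [integral_gaussian]
      congr 1
      rw [show π / (1/2 : ℝ) = 2 * π by ring]
    rw [hgauss, mul_comm]
  have hfinal : (ENNReal.ofReal (2*π))⁻¹ * (ENNReal.ofReal (Real.sqrt (2*π)) *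
        ∫⁻ x : ℝ, ENNReal.ofReal (Real.exp (-(x^2)/2)) * g x)
      = ∫⁻ x in s, gaussianPDF 0 1 x := by
    have hx : ∀ x : ℝ, ENNReal.ofReal (Real.exp (-(x^2)/2)) * g x
        = s.indicator (fun x => ENNReal.ofReal (Real.exp (-(x^2)/2))) x := by
      intro x; by_cases h : x ∈ s <;> simp [hg, h]
    have hc : (ENNReal.ofReal (2*π))⁻¹ * ENNReal.ofReal (Real.sqrt (2*π))
        = ENNReal.ofReal ((Real.sqrt (2*π))⁻¹) := by
      rw [← ENNReal.ofReal_inv_of_pos h2pi, ← ENNReal.ofReal_mul (by positivity)]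
      have h := Real.mul_self_sqrt h2pi.le
      have hpos : (0:ℝ) < Real.sqrt (2*π) := Real.sqrt_pos.2 h2pi
      congr 1
      conv_lhs => rw [show ((2*π : ℝ))⁻¹ = (Real.sqrt (2*π) * Real.sqrt (2*π))⁻¹ by rw [h]]
      rw [mul_inv, mul_assoc, inv_mul_cancel₀ hpos.ne', mul_one]
    rw [← mul_assoc, hc]
    simp only [hx]
    rw [lintegral_indicator hs, ← lintegral_const_mul' _ _ ENNReal.ofReal_ne_top]
    refine setLIntegral_congr_fun hs (fun x _ => ?_)
    rw [← ENNReal.ofReal_mul (by positivity)]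
    simp only [gaussianPDF, gaussianPDFReal]
    congr 2
    · norm_num
    · norm_num
  rw [hind, step1, step2, step3, step4, step5]
  exact hfinal
end

section
/- For α ∈ (0,1), A > 0, P > 0 and t > 0, if φ_t(u) = exp(t ∫_0^∞ (e^{iux} - 1) P e^{-Ax} x^{-1-α} dx) then φ_t(u) = exp(t P Γ(-α)((A - iu)^α - A^α)) for all u ∈ ℝ, where (A - iu)^α is the principal branch. -/
open Complex Real MeasureTheory Set Filter

namespace Stmt19Aux

noncomputable def J (α A u : ℝ) : ℂ :=
  ∫ x in Ioi (0:ℝ), (x:ℂ) ^ ((-α : ℝ):ℂ) * Complex.exp ((Complex.I*u - A) * x)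

noncomputable def K (α A u : ℝ) : ℂ :=
  ∫ x in Ioi (0:ℝ), (x:ℂ) ^ ((1 - α : ℝ):ℂ) * Complex.exp ((Complex.I*u - A) * x)

noncomputable def Phi (α A u : ℝ) : ℂ :=
  ∫ x in Ioi (0:ℝ), (Complex.exp (Complex.I*u*x) - 1) * ((Real.exp (-A*x) * x ^ (-1-α) : ℝ) : ℂ)

variable {α A : ℝ}

lemma int_real (hA : 0 < A) {b : ℝ} (hb : -1 < b) :
    IntegrableOn (fun x : ℝ => x ^ b * Real.exp (-A * x)) (Ioi 0) := by
  have h := integrableOn_rpow_mul_exp_neg_mul_rpow hb (by norm_num : (0:ℝ) < 1) hA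
  refine h.congr_fun (fun x _ => ?_) measurableSet_Ioi
  simp only [Real.rpow_one]

lemma norm_integrand {A : ℝ} {b u x : ℝ} (hx : 0 < x) :
    ‖(x:ℂ) ^ ((b:ℝ):ℂ) * Complex.exp ((Complex.I * u - A) * x)‖ = x ^ b * Real.exp (-A * x) := by
  rw [norm_mul,
    Complex.norm_cpow_eq_rpow_re_of_pos hx, Complex.norm_exp]
  have h1 : ((b:ℝ):ℂ).re = b := by simp
  have h2 : ((Complex.I*(u:ℂ) - A) * x).re = -A * x := by
    simp [Complex.mul_re, Complex.sub_re, Complex.sub_im, Complex.mul_im]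
  rw [h1, h2]

lemma meas_pow_exp (b u : ℝ) :
    AEStronglyMeasurable (fun x : ℝ => (x:ℂ) ^ ((b:ℝ):ℂ) * Complex.exp ((Complex.I*u - A) * x))
      (volume.restrict (Ioi 0)) := by
  apply ContinuousOn.aestronglyMeasurable ?_ measurableSet_Ioi
  intro x hx
  apply ContinuousWithinAt.mul
  · exact ((_root_.continuousAt_cpow_const (by simpa using hx)).comp
      Complex.continuous_ofReal.continuousAt).continuousWithinAt
  · exact (Complex.continuous_exp.comp
      (continuous_const.mul Complex.continuous_ofReal)).continuousWithinAt

lemma int_complex (hA : 0 < A) {b : ℝ} (hb : -1 < b) (u : ℝ) :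
    IntegrableOn (fun x : ℝ => (x:ℂ) ^ ((b:ℝ):ℂ) * Complex.exp ((Complex.I * u - A) * x))
      (Ioi 0) := by
  refine (int_real hA hb).mono' (meas_pow_exp b u) ?_
  refine (ae_restrict_iff' measurableSet_Ioi).2 (ae_of_all _ fun x hx => ?_)
  exact le_of_eq (norm_integrand hx)

lemma cpow_split {x : ℝ} (hx : 0 < x) (hα1 : α < 1) :
    (x:ℂ) ^ ((1 - α : ℝ):ℂ) = (x:ℂ) ^ ((-α : ℝ):ℂ) * x := by
  have hx0 : (x:ℂ) ≠ 0 := Complex.ofReal_ne_zero.2 hx.ne'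
  rw [show ((1 - α : ℝ):ℂ) = ((-α : ℝ):ℂ) + 1 by push_cast; ring,
    Complex.cpow_add _ _ hx0, Complex.cpow_one]

lemma hasDerivAt_inner (u x : ℝ) :
    HasDerivAt (fun v : ℝ => Complex.exp ((Complex.I*v - A) * x))
      (Complex.I * x * Complex.exp ((Complex.I*u - A) * x)) u := by
  have h : HasDerivAt (fun w : ℂ => Complex.exp ((Complex.I*w - A) * x))
      (Complex.exp ((Complex.I*u - A) * x) * (Complex.I * 1 * x)) (u:ℂ) := by
    exact ((((hasDerivAt_id ((u:ℝ):ℂ)).const_mul Complex.I).sub_const (A:ℂ)).mul_const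
      (x:ℂ)).cexp
  have h2 := h.comp_ofReal
  convert h2 using 1
  ring

lemma hasDerivAt_J (hα0 : 0 < α) (hα1 : α < 1) (hA : 0 < A) (u : ℝ) :
    HasDerivAt (J α A) (Complex.I * K α A u) u := by
  have hb1 : (-1 : ℝ) < -α := by linarith
  have hb2 : (-1 : ℝ) < 1 - α := by linarith
  have key := hasDerivAt_integral_of_dominated_loc_of_deriv_le
    (F := fun (v : ℝ) (x : ℝ) => (x:ℂ) ^ ((-α : ℝ):ℂ) * Complex.exp ((Complex.I*v - A) * x))
    (F' := fun (v : ℝ) (x : ℝ) =>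
      Complex.I * ((x:ℂ) ^ ((1 - α : ℝ):ℂ) * Complex.exp ((Complex.I*v - A) * x)))
    (x₀ := u) (bound := fun x => x ^ (1-α) * Real.exp (-A*x))
    (μ := volume.restrict (Ioi 0)) Filter.univ_mem
    (Eventually.of_forall fun v => meas_pow_exp _ _)
    (int_complex hA hb1 u)
    ((meas_pow_exp _ _).const_mul _)
    ?_ (int_real hA hb2) ?_
  · have h2 := key.2
    have : (∫ x in Ioi (0:ℝ),
        Complex.I * ((x:ℂ) ^ ((1 - α : ℝ):ℂ) * Complex.exp ((Complex.I*u - A) * x)))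
        = Complex.I * K α A u := by
      rw [K, integral_const_mul]
    rwa [this] at h2
  · refine (ae_restrict_iff' measurableSet_Ioi).2 (ae_of_all _ fun x hx => fun v _ => ?_)
    rw [norm_mul, Complex.norm_I, one_mul]
    exact le_of_eq (norm_integrand hx)
  · refine (ae_restrict_iff' measurableSet_Ioi).2 (ae_of_all _ fun x hx => fun v _ => ?_)
    have h := (hasDerivAt_inner (A := A) v x).const_mul ((x:ℂ) ^ ((-α : ℝ):ℂ))
    refine h.congr_deriv ?_
    symm
    simp only [cpow_split hx hα1]
    ring

lemma hasDerivAt_inner_x (u : ℝ) (x : ℝ) :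
    HasDerivAt (fun y : ℝ => Complex.exp ((Complex.I*u - A) * y))
      ((Complex.I*u - A) * Complex.exp ((Complex.I*u - A) * x)) x := by
  have h : HasDerivAt (fun w : ℂ => Complex.exp ((Complex.I*u - A) * w))
      (Complex.exp ((Complex.I*u - A) * x) * ((Complex.I*u - A) * 1)) (x:ℂ) :=
    ((hasDerivAt_id ((x:ℝ):ℂ)).const_mul (Complex.I*u - A)).cexp
  have h2 := h.comp_ofReal
  convert h2 using 1
  ring

lemma K_rel (hα0 : 0 < α) (hα1 : α < 1) (hA : 0 < A) (u : ℝ) :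
    ((A:ℂ) - Complex.I*u) * K α A u = ((1 - α : ℝ):ℂ) * J α A u := by
  have hb1 : (-1 : ℝ) < -α := by linarith
  have hb2 : (-1 : ℝ) < 1 - α := by linarith
  set f : ℝ → ℂ := fun x => (x:ℂ) ^ ((1 - α : ℝ):ℂ) * Complex.exp ((Complex.I*u - A) * x) with hf
  set f' : ℝ → ℂ := fun x =>
    ((1 - α : ℝ):ℂ) * ((x:ℂ) ^ ((-α : ℝ):ℂ) * Complex.exp ((Complex.I*u - A) * x)) +
    (Complex.I*u - A) * ((x:ℂ) ^ ((1 - α : ℝ):ℂ) * Complex.exp ((Complex.I*u - A) * x)) with hf'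
  have hf0 : f 0 = 0 := by
    simp only [hf, Complex.ofReal_zero]
    rw [Complex.zero_cpow (by exact_mod_cast (by linarith : (1 - α : ℝ) ≠ 0)), zero_mul]
  have hcont : ContinuousWithinAt f (Ici (0:ℝ)) 0 := by
    rw [ContinuousWithinAt, hf0]
    apply squeeze_zero_norm' (a := fun x : ℝ => x ^ (1-α) * Real.exp (-A*x))
    · filter_upwards [self_mem_nhdsWithin] with x hx
      rcases eq_or_lt_of_le (mem_Ici.1 hx) with h | h
      · rw [← h, hf0]
        simp [Real.zero_rpow (by linarith : (1:ℝ) - α ≠ 0)]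
      · exact le_of_eq (norm_integrand h)
    · have hc : ContinuousWithinAt (fun x : ℝ => x ^ (1-α) * Real.exp (-A*x)) (Ici (0:ℝ)) 0 := by
        apply ContinuousWithinAt.mul
        · exact (Real.continuousAt_rpow_const 0 (1-α) (Or.inr (by linarith))).continuousWithinAt
        · exact (Real.continuous_exp.comp (continuous_const.mul continuous_id)).continuousWithinAt
      have : (0:ℝ) ^ (1-α) * Real.exp (-A*0) = 0 := by
        simp [Real.zero_rpow (by linarith : (1:ℝ) - α ≠ 0)]
      rwa [ContinuousWithinAt, this] at hc
  have hderiv : ∀ x ∈ Ioi (0:ℝ), HasDerivAt f (f' x) x := by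
    intro x hx
    have hx' : (0:ℝ) < x := hx
    have hpow : HasDerivAt (fun y : ℝ => (y:ℂ) ^ ((1 - α : ℝ):ℂ))
        (((1 - α : ℝ):ℂ) * (x:ℂ) ^ (((1 - α : ℝ):ℂ) - 1)) x := by
      exact (Complex.hasStrictDerivAt_cpow_const (by simpa using hx')).hasDerivAt.comp_ofReal
    have hmul := hpow.mul (hasDerivAt_inner_x (A := A) u x)
    refine hmul.congr_deriv ?_
    symm
    simp only [hf']
    rw [show ((1 - α : ℝ):ℂ) - 1 = ((-α : ℝ):ℂ) by push_cast; ring]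
    ring
  have hint : IntegrableOn f' (Ioi (0:ℝ)) := by
    exact ((int_complex hA hb1 u).const_mul _).add ((int_complex hA hb2 u).const_mul _)
  have htop : Tendsto f atTop (nhds (0:ℂ)) := by
    apply squeeze_zero_norm' (a := fun x : ℝ => x ^ (1-α) * Real.exp (-A*x))
    · filter_upwards [eventually_gt_atTop (0:ℝ)] with x hx
      exact le_of_eq (norm_integrand hx)
    · exact tendsto_rpow_mul_exp_neg_mul_atTop_nhds_zero (1-α) A hA
  have key := MeasureTheory.integral_Ioi_of_hasDerivAt_of_tendsto hcont hderiv hint htop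
  rw [hf0, sub_zero] at key
  have hsplit : (∫ x in Ioi (0:ℝ), f' x)
      = ((1 - α : ℝ):ℂ) * J α A u + (Complex.I*u - A) * K α A u := by
    rw [hf', integral_add ((int_complex hA hb1 u).const_mul _) ((int_complex hA hb2 u).const_mul _),
      integral_const_mul, integral_const_mul, J, K]
  rw [hsplit] at key
  linear_combination -key

lemma J_zero (hα0 : 0 < α) (hα1 : α < 1) (hA : 0 < A) :
    J α A 0 = (1/(A:ℂ)) ^ ((1 - α : ℝ):ℂ) * ((Real.Gamma (1-α) : ℝ):ℂ) := by
  have hre : 0 < (((1 - α : ℝ):ℂ)).re := by simp; linarith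
  have := Complex.integral_cpow_mul_exp_neg_mul_Ioi (a := ((1 - α : ℝ):ℂ)) hre hA
  rw [J]
  have hcongr : (∫ x in Ioi (0:ℝ), (x:ℂ) ^ ((-α : ℝ):ℂ) * Complex.exp ((Complex.I*(0:ℝ) - A) * x))
      = ∫ t in Ioi (0:ℝ), (t:ℂ) ^ (((1 - α : ℝ):ℂ) - 1) * Complex.exp (-((A:ℂ) * t)) := by
    apply integral_congr_ae (ae_of_all _ fun x => ?_)
    rw [show ((1 - α : ℝ):ℂ) - 1 = ((-α : ℝ):ℂ) by push_cast; ring]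
    congr 1
    congr 1
    push_cast
    ring
  rw [hcongr, this, ← Complex.Gamma_ofReal]

lemma base_ne (hA : 0 < A) (u : ℝ) : ((A:ℂ) - Complex.I*u) ≠ 0 := by
  intro h
  have := congrArg Complex.re h
  simp [Complex.sub_re, Complex.mul_re] at this
  linarith

lemma base_slit (hA : 0 < A) (u : ℝ) : ((A:ℂ) - Complex.I*u) ∈ Complex.slitPlane := by
  rw [Complex.mem_slitPlane_iff]
  left
  simp [Complex.sub_re, Complex.mul_re]
  exact hA

lemma hasDerivAt_base_pow (hA : 0 < A) (c : ℂ) (u : ℝ) :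
    HasDerivAt (fun v : ℝ => ((A:ℂ) - Complex.I*v) ^ c)
      (c * ((A:ℂ) - Complex.I*u) ^ (c - 1) * (-Complex.I)) u := by
  have hb : HasDerivAt (fun w : ℂ => ((A:ℂ) - Complex.I*w)) (-(Complex.I*1)) ((u:ℝ):ℂ) :=
    ((hasDerivAt_id ((u:ℝ):ℂ)).const_mul Complex.I).const_sub (A:ℂ)
  have h := (hb.cpow_const (c := c) (base_slit hA u)).comp_ofReal
  convert h using 1
  ring

lemma J_formula (hα0 : 0 < α) (hα1 : α < 1) (hA : 0 < A) (u : ℝ) :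
    J α A u = ((Real.Gamma (1-α) : ℝ):ℂ) * ((A:ℂ) - Complex.I*u) ^ ((α - 1 : ℝ):ℂ) := by
  set c : ℂ := ((1 - α : ℝ):ℂ) with hc
  set g : ℝ → ℂ := fun v => J α A v * ((A:ℂ) - Complex.I*v) ^ c with hg
  have hgderiv : ∀ v : ℝ, HasDerivAt g 0 v := by
    intro v
    have h1 := (hasDerivAt_J hα0 hα1 hA v).mul (hasDerivAt_base_pow hA c v)
    have hsplit : ((A:ℂ) - Complex.I*v) ^ c = ((A:ℂ) - Complex.I*v) ^ (c - 1) * ((A:ℂ) - Complex.I*v) := by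
      nth_rewrite 1 [show c = (c - 1) + 1 by ring]
      rw [Complex.cpow_add _ _ (base_ne hA v), Complex.cpow_one]
    have hrel := K_rel hα0 hα1 hA v
    refine h1.congr_deriv ?_
    symm
    rw [hsplit]
    rw [hc]
    linear_combination (-Complex.I * (((A:ℂ) - Complex.I*v) ^ (((1 - α : ℝ):ℂ) - 1))) * hrel
  have hconst : g u = g 0 :=
    is_const_of_deriv_eq_zero (fun v => (hgderiv v).differentiableAt)
      (fun v => (hgderiv v).deriv) u 0
  have hg0 : g 0 = ((Real.Gamma (1-α) : ℝ):ℂ) := by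
    have hA0 : ((A:ℂ) - Complex.I*(0:ℝ)) = (A:ℂ) := by simp
    have hAne : (A:ℂ) ≠ 0 := Complex.ofReal_ne_zero.2 hA.ne'
    rw [hg]
    simp only [hA0]
    rw [J_zero hα0 hα1 hA, one_div, Complex.inv_cpow _ _ (by
      rw [Complex.arg_ofReal_of_nonneg hA.le]; exact (Real.pi_ne_zero).symm)]
    rw [mul_comm (((A:ℂ) ^ c)⁻¹) _, mul_assoc, inv_mul_cancel₀ (by
      simp only [ne_eq, Complex.cpow_eq_zero_iff, not_and_or]
      exact Or.inl hAne), mul_one]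
  have hpowinv : ((A:ℂ) - Complex.I*u) ^ c * ((A:ℂ) - Complex.I*u) ^ ((α - 1 : ℝ):ℂ) = 1 := by
    rw [← Complex.cpow_add _ _ (base_ne hA u), hc,
      show ((1 - α : ℝ):ℂ) + ((α - 1 : ℝ):ℂ) = 0 by push_cast; ring, Complex.cpow_zero]
  calc J α A u = J α A u * (((A:ℂ) - Complex.I*u) ^ c * ((A:ℂ) - Complex.I*u) ^ ((α - 1 : ℝ):ℂ)) := by
        rw [hpowinv, mul_one]
    _ = g u * ((A:ℂ) - Complex.I*u) ^ ((α - 1 : ℝ):ℂ) := by rw [hg]; ring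
    _ = ((Real.Gamma (1-α) : ℝ):ℂ) * ((A:ℂ) - Complex.I*u) ^ ((α - 1 : ℝ):ℂ) := by
        rw [hconst, hg0]

lemma norm_exp_I_sub_one (θ : ℝ) : ‖Complex.exp (Complex.I*θ) - 1‖ ≤ |θ| := by
  have hz : Complex.exp (Complex.I*θ) - 1
      = ((Real.cos θ - 1 : ℝ):ℂ) + ((Real.sin θ : ℝ):ℂ) * Complex.I := by
    rw [mul_comm, Complex.exp_mul_I, ← Complex.ofReal_cos, ← Complex.ofReal_sin]
    push_cast
    ring
  rw [hz, Complex.norm_add_mul_I]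
  rw [show |θ| = Real.sqrt (θ^2) by rw [Real.sqrt_sq_eq_abs]]
  apply Real.sqrt_le_sqrt
  have h1 := Real.sin_sq_le_sq (x := θ/2)
  have h2 := Real.cos_two_mul (θ/2)
  have h3 := Real.sin_sq_add_cos_sq (θ/2)
  have h4 := Real.sin_sq_add_cos_sq θ
  have hcos : Real.cos θ = Real.cos (2*(θ/2)) := by rw [show 2*(θ/2) = θ by ring]
  nlinarith [h1, h2, h3, h4, hcos]

lemma meas_phi (u : ℝ) :
    AEStronglyMeasurable
      (fun x : ℝ => (Complex.exp (Complex.I*u*x) - 1) * ((Real.exp (-A*x) * x ^ (-1-α) : ℝ) : ℂ))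
      (volume.restrict (Ioi 0)) := by
  apply ContinuousOn.aestronglyMeasurable ?_ measurableSet_Ioi
  intro x hx
  apply ContinuousWithinAt.mul
  · exact ((Complex.continuous_exp.comp
      ((continuous_const.mul Complex.continuous_ofReal))).sub continuous_const).continuousWithinAt
  · apply Complex.continuous_ofReal.continuousAt.comp_continuousWithinAt
    apply ContinuousWithinAt.mul
    · exact (Real.continuous_exp.comp (continuous_const.mul continuous_id)).continuousWithinAt
    · exact (Real.continuousAt_rpow_const x (-1-α) (Or.inl (ne_of_gt hx))).continuousWithinAt

lemma x_mul_rpow {x : ℝ} (hx : 0 < x) : x * x ^ (-1-α) = x ^ (-α) := by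
  nth_rewrite 1 [show x = x ^ (1:ℝ) by rw [Real.rpow_one]]
  rw [← Real.rpow_add hx, show 1 + (-1-α) = -α by ring]

lemma fold_integrand {x : ℝ} (hx : 0 < x) (v : ℝ) :
    (x:ℂ) * ((Real.exp (-A*x) * x ^ (-1-α) : ℝ):ℂ) * Complex.exp (Complex.I*v*x)
      = (x:ℂ) ^ ((-α : ℝ):ℂ) * Complex.exp ((Complex.I*v - A) * x) := by
  have h1 : ((Real.exp (-A*x) : ℝ):ℂ) = Complex.exp ((-A*x : ℝ):ℂ) := by
    rw [Complex.ofReal_exp]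
  have h2 : ((x ^ (-1-α) : ℝ):ℂ) = (x:ℂ) ^ ((-1-α : ℝ):ℂ) := Complex.ofReal_cpow hx.le _
  have h3 : (x:ℂ) * (x:ℂ) ^ ((-1-α : ℝ):ℂ) = (x:ℂ) ^ ((-α : ℝ):ℂ) := by
    nth_rewrite 1 [show (x:ℂ) = (x:ℂ) ^ (1:ℂ) by rw [Complex.cpow_one]]
    rw [← Complex.cpow_add _ _ (Complex.ofReal_ne_zero.2 hx.ne'),
      show (1:ℂ) + ((-1-α : ℝ):ℂ) = ((-α : ℝ):ℂ) by push_cast; ring]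
  rw [Complex.ofReal_mul, h1, h2]
  calc (x:ℂ) * (Complex.exp ((-A*x : ℝ):ℂ) * (x:ℂ) ^ ((-1-α : ℝ):ℂ)) * Complex.exp (Complex.I*v*x)
      = ((x:ℂ) * (x:ℂ) ^ ((-1-α : ℝ):ℂ)) *
        (Complex.exp (Complex.I*v*x) * Complex.exp ((-A*x : ℝ):ℂ)) := by ring
    _ = (x:ℂ) ^ ((-α : ℝ):ℂ) * Complex.exp ((Complex.I*v - A) * x) := by
        rw [h3, ← Complex.exp_add]
        congr 1
        push_cast
        ring

lemma int_phi (hα0 : 0 < α) (hα1 : α < 1) (hA : 0 < A) (u : ℝ) :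
    IntegrableOn
      (fun x : ℝ => (Complex.exp (Complex.I*u*x) - 1) * ((Real.exp (-A*x) * x ^ (-1-α) : ℝ) : ℂ))
      (Ioi 0) := by
  refine (((int_real hA (by linarith : (-1:ℝ) < -α)).const_mul |u|).mono' (meas_phi u) ?_)
  refine (ae_restrict_iff' measurableSet_Ioi).2 (ae_of_all _ fun x hx => ?_)
  have hx : (0:ℝ) < x := hx
  rw [norm_mul, Complex.norm_real, Real.norm_eq_abs]
  have hnn : 0 ≤ Real.exp (-A*x) * x ^ (-1-α) :=
    mul_nonneg (Real.exp_pos _).le (Real.rpow_nonneg hx.le _)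
  rw [_root_.abs_of_nonneg hnn]
  have h1 : ‖Complex.exp (Complex.I*u*x) - 1‖ ≤ |u*x| := by
    have := norm_exp_I_sub_one (u*x)
    rwa [show ((u*x : ℝ):ℂ) = (u:ℂ)*(x:ℂ) by push_cast; ring, ← mul_assoc] at this
  calc ‖Complex.exp (Complex.I*u*x) - 1‖ * (Real.exp (-A*x) * x ^ (-1-α))
      ≤ |u*x| * (Real.exp (-A*x) * x ^ (-1-α)) := by
        apply mul_le_mul_of_nonneg_right h1 hnn
    _ = |u| * (x ^ (-α) * Real.exp (-A*x)) := by
        rw [abs_mul, abs_of_pos hx]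
        rw [show |u| * x * (Real.exp (-A*x) * x ^ (-1-α)) = |u| * ((x * x ^ (-1-α)) * Real.exp (-A*x)) by ring,
          x_mul_rpow hx]

lemma hasDerivAt_Phi (hα0 : 0 < α) (hα1 : α < 1) (hA : 0 < A) (u : ℝ) :
    HasDerivAt (Phi α A) (Complex.I * J α A u) u := by
  have hb1 : (-1 : ℝ) < -α := by linarith
  have key := hasDerivAt_integral_of_dominated_loc_of_deriv_le
    (F := fun (v : ℝ) (x : ℝ) =>
      (Complex.exp (Complex.I*v*x) - 1) * ((Real.exp (-A*x) * x ^ (-1-α) : ℝ) : ℂ))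
    (F' := fun (v : ℝ) (x : ℝ) =>
      Complex.I * ((x:ℂ) ^ ((-α : ℝ):ℂ) * Complex.exp ((Complex.I*v - A) * x)))
    (x₀ := u) (bound := fun x => x ^ (-α) * Real.exp (-A*x))
    (μ := volume.restrict (Ioi 0)) Filter.univ_mem
    (Eventually.of_forall fun v => meas_phi v)
    (int_phi hα0 hα1 hA u)
    ((meas_pow_exp _ _).const_mul _)
    ?_ (int_real hA hb1) ?_
  · have h2 := key.2
    have : (∫ x in Ioi (0:ℝ),
        Complex.I * ((x:ℂ) ^ ((-α : ℝ):ℂ) * Complex.exp ((Complex.I*u - A) * x)))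
        = Complex.I * J α A u := by
      rw [J, integral_const_mul]
    rwa [this] at h2
  · refine (ae_restrict_iff' measurableSet_Ioi).2 (ae_of_all _ fun x hx => fun v _ => ?_)
    rw [norm_mul, Complex.norm_I, one_mul]
    exact le_of_eq (norm_integrand hx)
  · refine (ae_restrict_iff' measurableSet_Ioi).2 (ae_of_all _ fun x hx => fun v _ => ?_)
    have hx : (0:ℝ) < x := hx
    have hin : HasDerivAt (fun w : ℂ => Complex.exp (Complex.I*w*x) - 1)
        (Complex.exp (Complex.I*v*x) * (Complex.I*1*x)) ((v:ℝ):ℂ) :=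
      ((((hasDerivAt_id ((v:ℝ):ℂ)).const_mul Complex.I).mul_const (x:ℂ)).cexp).sub_const 1
    have h := (hin.comp_ofReal).mul_const ((Real.exp (-A*x) * x ^ (-1-α) : ℝ) : ℂ)
    refine h.congr_deriv ?_
    symm
    beta_reduce
    rw [← fold_integrand (A := A) (α := α) hx v]
    ring

lemma Phi_formula (hα0 : 0 < α) (hα1 : α < 1) (hA : 0 < A) (u : ℝ) :
    Phi α A u = ((Real.Gamma (-α) : ℝ):ℂ) *
      (((A:ℂ) - Complex.I*u) ^ ((α : ℝ):ℂ) - (A:ℂ) ^ ((α : ℝ):ℂ)) := by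
  set Psi : ℝ → ℂ := fun v => ((Real.Gamma (-α) : ℝ):ℂ) *
      (((A:ℂ) - Complex.I*v) ^ ((α : ℝ):ℂ) - (A:ℂ) ^ ((α : ℝ):ℂ)) with hPsi
  have hGamma : (Real.Gamma (1-α) : ℝ) = -α * Real.Gamma (-α) := by
    have := Real.Gamma_add_one (s := -α) (by linarith)
    rwa [show -α + 1 = 1 - α by ring] at this
  have hD : ∀ v : ℝ, HasDerivAt (fun w => Phi α A w - Psi w) 0 v := by
    intro v
    have h1 := hasDerivAt_Phi hα0 hα1 hA v
    have h2 : HasDerivAt Psi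
        (((Real.Gamma (-α) : ℝ):ℂ) * (((α : ℝ):ℂ) * ((A:ℂ) - Complex.I*v) ^ (((α : ℝ):ℂ) - 1) * (-Complex.I))) v := by
      exact (((hasDerivAt_base_pow hA ((α : ℝ):ℂ) v).sub_const ((A:ℂ) ^ ((α : ℝ):ℂ))).const_mul _)
    have h3 := h1.sub h2
    refine h3.congr_deriv ?_
    symm
    rw [J_formula hα0 hα1 hA v]
    rw [show (((α : ℝ):ℂ) - 1) = ((α - 1 : ℝ):ℂ) by push_cast; ring]
    rw [show ((Real.Gamma (1-α) : ℝ):ℂ) = -(α:ℂ) * ((Real.Gamma (-α) : ℝ):ℂ) by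
      rw [hGamma]; push_cast; ring]
    ring
  have hconst : Phi α A u - Psi u = Phi α A 0 - Psi 0 :=
    is_const_of_deriv_eq_zero (fun v => (hD v).differentiableAt)
      (fun v => (hD v).deriv) u 0
  have hPhi0 : Phi α A 0 = 0 := by
    rw [Phi]
    have : ∀ x : ℝ, (Complex.exp (Complex.I*(0:ℝ)*x) - 1) *
        ((Real.exp (-A*x) * x ^ (-1-α) : ℝ) : ℂ) = 0 := by
      intro x
      simp
    simp only [this, integral_zero]
  have hPsi0 : Psi 0 = 0 := by
    rw [hPsi]
    simp
  have h := hconst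
  rw [hPhi0, hPsi0, sub_zero] at h
  exact sub_eq_zero.1 h

end Stmt19Aux

open Stmt19Aux in
/-- Lévy–Khintchine exponent of an (uncompensated) tempered stable subordinator,
`α ∈ (0,1)`: `exp(t ∫_0^∞ (e^{iux}-1) P e^{-Ax} x^{-1-α} dx)
  = exp(t P Γ(-α)((A-iu)^α - A^α))`. -/
theorem stmt_19 (α A P t : ℝ) (hα0 : 0 < α) (hα1 : α < 1) (hA : 0 < A) (hP : 0 < P)
    (ht : 0 < t) :
    ∀ u : ℝ,
      Complex.exp (↑t * ∫ x in Set.Ioi (0 : ℝ),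
          (Complex.exp (Complex.I * ↑u * ↑x) - 1) * ↑(P * Real.exp (-A * x) * x ^ (-1 - α)))
        = Complex.exp (↑(t * P * Real.Gamma (-α)) *
            (((A : ℂ) - Complex.I * ↑u) ^ (α : ℂ) - (A : ℂ) ^ (α : ℂ))) := by
  intro u
  congr 1
  have h1 : (∫ x in Set.Ioi (0:ℝ),
        (Complex.exp (Complex.I*u*x) - 1) * ((P * Real.exp (-A*x) * x ^ (-1-α) : ℝ):ℂ))
      = (P:ℂ) * Stmt19Aux.Phi α A u := by
    rw [Stmt19Aux.Phi, ← integral_const_mul]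
    exact integral_congr_ae (ae_of_all _ fun x => by push_cast; ring)
  rw [h1, Stmt19Aux.Phi_formula hα0 hα1 hA u]
  push_cast
  ring
end
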